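/- Let q ≥ 2, and let C be a code of length n over an alphabet Q of size q with |C| = q^k such that every coordinate i ∈ [n] has t pairwise disjoint recovering sets, each of size exactly r. Then k/n ≤ (t+1)^{−1/r}. -/

import Mathlib

open Finset

lemma count_dominated {n : ℕ} (i : Fin n) (U : Finset (Fin n)) (hiU : i ∉ U) :
    (univ.filter (fun π : Equiv.Perm (Fin n) => ∀ m ∈ U, π m < π i)).card * (U.card + 1)
      = Fintype.card (Equiv.Perm (Fin n)) := by
  classical
  have hne : (insert i U).Nonempty := insert_nonempty _ _
  have ham : ∀ σ : Equiv.Perm (Fin n), ∃ m, m ∈ insert i U ∧ ∀ m' ∈ insert i U, σ m' ≤ σ m := by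
    intro σ
    obtain ⟨m, hm, h⟩ := Finset.exists_max_image (insert i U) σ hne
    exact ⟨m, hm, h⟩
  set am : Equiv.Perm (Fin n) → Fin n := fun σ => (ham σ).choose with ham_def
  have am_mem : ∀ σ : Equiv.Perm (Fin n), am σ ∈ insert i U := fun σ => (ham σ).choose_spec.1
  have am_max : ∀ σ : Equiv.Perm (Fin n), ∀ m' ∈ insert i U, σ m' ≤ σ (am σ) :=
    fun σ => (ham σ).choose_spec.2
  have am_unique : ∀ σ : Equiv.Perm (Fin n), ∀ z ∈ insert i U,
      (∀ m' ∈ insert i U, σ m' ≤ σ z) → am σ = z := by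
    intro σ z hz hmax
    have h1 : σ (am σ) ≤ σ z := hmax _ (am_mem σ)
    have h2 : σ z ≤ σ (am σ) := am_max σ z hz
    exact σ.injective (le_antisymm h1 h2)
  have key : ((univ.filter (fun π : Equiv.Perm (Fin n) => ∀ m ∈ U, π m < π i)) ×ˢ (insert i U)).card
      = (univ : Finset (Equiv.Perm (Fin n))).card := by
    apply Finset.card_nbij' (fun p => p.1 * Equiv.swap p.2 i)
      (fun σ => (σ * Equiv.swap (am σ) i, am σ))
    · intro a _; exact mem_univ _
    · intro σ _
      rw [Finset.mem_coe, mem_product]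
      constructor
      · rw [mem_filter]
        refine ⟨mem_univ _, ?_⟩
        intro m hm
        have hmi : m ≠ i := fun h => hiU (h ▸ hm)
        have hval : (σ * Equiv.swap (am σ) i) i = σ (am σ) := by
          simp [Equiv.Perm.mul_apply]
        rw [hval]
        by_cases hma : m = am σ
        · have hv : (σ * Equiv.swap (am σ) i) m = σ i := by
            simp [Equiv.Perm.mul_apply, hma]
          rw [hv]
          have hle : σ i ≤ σ (am σ) := am_max σ i (mem_insert_self _ _)
          have hne2 : σ i ≠ σ (am σ) := by
            intro h
            have hia : i = am σ := σ.injective h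
            exact hiU (hia ▸ (hma ▸ hm))
          exact lt_of_le_of_ne hle hne2
        · have hv : (σ * Equiv.swap (am σ) i) m = σ m := by
            simp [Equiv.Perm.mul_apply, Equiv.swap_apply_of_ne_of_ne hma hmi]
          rw [hv]
          have hle : σ m ≤ σ (am σ) := am_max σ m (mem_insert_of_mem hm)
          have hne2 : σ m ≠ σ (am σ) := fun h => hma (σ.injective h)
          exact lt_of_le_of_ne hle hne2
      · exact am_mem σ
    · rintro ⟨π, z⟩ hp
      rw [Finset.mem_coe, mem_product, mem_filter] at hp
      obtain ⟨⟨-, hP⟩, hz⟩ := hp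
      have hmax : ∀ m' ∈ insert i U, (π * Equiv.swap z i) m' ≤ (π * Equiv.swap z i) z := by
        intro m' hm'
        have hvz : (π * Equiv.swap z i) z = π i := by simp [Equiv.Perm.mul_apply]
        rw [hvz]
        rcases mem_insert.1 hm' with h | h
        · rw [h]
          have hv : (π * Equiv.swap z i) i = π z := by
            simp [Equiv.Perm.mul_apply]
          rw [hv]
          by_cases hzi : z = i
          · rw [hzi]
          · have hz' : z ∈ U := by
              rcases mem_insert.1 hz with hh | hh
              · exact absurd hh hzi
              · exact hh
            exact (hP _ hz').le
        · by_cases hmz : m' = z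
          · subst hmz; simp [Equiv.Perm.mul_apply]
          · have hmi : m' ≠ i := fun hh => hiU (hh ▸ h)
            have hv : (π * Equiv.swap z i) m' = π m' := by
              simp [Equiv.Perm.mul_apply, Equiv.swap_apply_of_ne_of_ne hmz hmi]
            rw [hv]
            exact (hP _ h).le
      have hamz : am (π * Equiv.swap z i) = z := am_unique _ z hz hmax
      simp only [hamz]
      rw [mul_assoc, Equiv.swap_mul_self, mul_one]
    · intro σ _
      simp only
      rw [mul_assoc, Equiv.swap_mul_self, mul_one]
  rw [card_product, card_insert_of_notMem hiU, card_univ] at key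
  exact key
lemma G_closed (r : ℕ) : ∀ (t : ℕ) (a : ℝ), 0 < a →
    ∑ s ∈ range (t + 1), (-1 : ℝ) ^ s * (t.choose s) / (a + s * r)
      = (t.factorial * r ^ t : ℝ) / ∏ j ∈ range (t + 1), (a + j * r) := by
  intro t
  induction t with
  | zero => intro a ha; simp
  | succ t ih =>
    intro a ha
    have har : (0:ℝ) < a + r := by positivity
    have hprod : ∀ b : ℝ, 0 < b → (0:ℝ) < ∏ j ∈ range (t + 1), (b + j * r) := by
      intro b hb
      apply Finset.prod_pos
      intro j _
      positivity
    -- recursion: G a (t+1) = G a t - G (a+r) t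
    have hrec : ∑ s ∈ range (t + 2), (-1 : ℝ) ^ s * ((t+1).choose s) / (a + s * r)
        = (∑ s ∈ range (t + 1), (-1 : ℝ) ^ s * (t.choose s) / (a + s * r))
          - ∑ s ∈ range (t + 1), (-1 : ℝ) ^ s * (t.choose s) / ((a + r) + s * r) := by
      rw [Finset.sum_range_succ' (fun s => (-1 : ℝ) ^ s * ((t+1).choose s) / (a + s * r)) (t+1)]
      push_cast
      have hsplit : ∀ s ∈ range (t + 1),
          (-1 : ℝ) ^ (s+1) * ((t+1).choose (s+1)) / (a + ((s:ℝ) + 1) * r)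
            = (-1 : ℝ) ^ (s+1) * (t.choose s) / ((a + r) + s * r)
              + (-1 : ℝ) ^ (s+1) * (t.choose (s+1)) / (a + ((s:ℝ) + 1) * r) := by
        intro s _
        rw [Nat.choose_succ_succ]
        push_cast
        have h : a + (↑s + 1) * r = (a + r) + s * r := by ring
        rw [h]
        ring
      rw [Finset.sum_congr rfl hsplit, Finset.sum_add_distrib]
      have h1 : ∑ s ∈ range (t + 1), (-1 : ℝ) ^ (s+1) * (t.choose s) / ((a + r) + s * r)
          = - ∑ s ∈ range (t + 1), (-1 : ℝ) ^ s * (t.choose s) / ((a + r) + s * r) := by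
        rw [← Finset.sum_neg_distrib]
        apply Finset.sum_congr rfl
        intro s _
        ring
      have h2 : ∑ s ∈ range (t + 1), (-1 : ℝ) ^ (s+1) * (t.choose (s+1)) / (a + ((s:ℝ) + 1) * r)
          = (∑ s ∈ range (t + 1), (-1 : ℝ) ^ s * (t.choose s) / (a + s * r)) - 1 / a := by
        have e := Finset.sum_range_succ' (fun s => (-1 : ℝ) ^ s * (t.choose s) / (a + s * r)) t
        push_cast at e
        simp only [pow_zero, Nat.choose_zero_right, one_mul, zero_mul, add_zero] at e
        rw [e, Finset.sum_range_succ]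
        simp [Nat.choose_succ_self]
      rw [h1, h2]
      simp
      ring
    rw [hrec, ih a ha, ih (a+r) har]
    set Pa := ∏ j ∈ range (t + 1), (a + (j:ℝ) * r) with hPadef
    set Par := ∏ j ∈ range (t + 1), ((a + r) + (j:ℝ) * r) with hPardef
    have hPa : (0:ℝ) < Pa := hprod a ha
    have hPar : (0:ℝ) < Par := hprod (a+r) har
    have e1 : ∏ j ∈ range (t + 2), (a + (j:ℝ) * r) = Pa * (a + ((t:ℝ)+1) * r) := by
      rw [Finset.prod_range_succ]
      push_cast
      ring
    have e2 : ∏ j ∈ range (t + 2), (a + (j:ℝ) * r) = Par * a := by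
      rw [Finset.prod_range_succ' (fun j => a + (j:ℝ) * r) (t+1)]
      have : ∀ j ∈ range (t+1), a + ((j:ℕ)+1 : ℕ) * (r:ℝ) = (a + r) + (j:ℝ) * r := by
        intro j _
        push_cast
        ring
      rw [Finset.prod_congr rfl this]
      simp [hPardef]
    have e3 : Pa * (a + ((t:ℝ)+1) * r) = Par * a := e1.symm.trans e2
    have efact : (((t+1).factorial : ℕ) : ℝ) = ((t:ℝ)+1) * (t.factorial : ℝ) := by
      rw [Nat.factorial_succ]
      push_cast
      ring
    rw [e1, efact, div_sub_div _ _ (ne_of_gt hPa) (ne_of_gt hPar),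
      div_eq_div_iff (by positivity) (by positivity)]
    linear_combination (-((t.factorial : ℝ) * (r:ℝ)^t) * Pa) * e3
lemma sum_eq_prod_form (r t : ℕ) (hr : 1 ≤ r) :
    ∑ s ∈ range (t + 1), (-1 : ℝ) ^ s * (t.choose s) / (1 + s * r)
      = ∏ j ∈ range t, (((j : ℝ) + 1) * r) / (((j : ℝ) + 1) * r + 1) := by
  have hG := G_closed r t 1 one_pos
  rw [hG]
  have hden : ∏ j ∈ range (t + 1), ((1:ℝ) + j * r) = ∏ j ∈ range t, (((j : ℝ) + 1) * r + 1) := by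
    rw [Finset.prod_range_succ' (fun j => (1:ℝ) + j * r) t]
    have : ∀ j ∈ range t, (1:ℝ) + ((j:ℕ)+1 : ℕ) * (r:ℝ) = ((j : ℝ) + 1) * r + 1 := by
      intro j _; push_cast; ring
    rw [Finset.prod_congr rfl this]
    simp
  have hnum : ∏ j ∈ range t, (((j:ℝ)+1) * r) = (t.factorial : ℝ) * r ^ t := by
    rw [Finset.prod_mul_distrib, Finset.prod_const, card_range]
    congr 1
    rw [← Finset.prod_range_add_one_eq_factorial]
    push_cast
    rfl
  rw [hden, Finset.prod_div_distrib, hnum]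

lemma telescope (t : ℕ) : ∏ j ∈ range t, ((j:ℝ)+1)/((j:ℝ)+2) = 1/((t:ℝ)+1) := by
  induction t with
  | zero => simp
  | succ t ih =>
    rw [Finset.prod_range_succ, ih]
    have h1 : ((t:ℝ)+1) ≠ 0 := by positivity
    have h2 : ((t:ℝ)+2) ≠ 0 := by positivity
    push_cast
    field_simp
    ring

lemma pointwise_bern (r : ℕ) (hr : 1 ≤ r) (j : ℕ) :
    ((((j:ℝ)+1) * r) / (((j:ℝ)+1) * r + 1)) ^ r ≤ ((j:ℝ)+1)/((j:ℝ)+2) := by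
  set m : ℝ := ((j:ℝ)+1) * r with hm
  have hrpos : (0:ℝ) < r := by
    have : (1:ℝ) ≤ r := by exact_mod_cast hr
    linarith
  have hjpos : (0:ℝ) < (j:ℝ) + 1 := by positivity
  have hmpos : (0:ℝ) < m := by positivity
  have hinv : (0:ℝ) < 1/m := by positivity
  have hb := one_add_mul_le_pow (a := 1/m) (by linarith : (-2:ℝ) ≤ 1/m) r
  have h1 : (1:ℝ) + r * (1/m) = 1 + 1/((j:ℝ)+1) := by
    rw [hm, mul_one_div, mul_comm ((j:ℝ)+1) (r:ℝ), ← div_div, div_self (ne_of_gt hrpos)]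
  have h2 : ((1:ℝ) + 1/m) = (m+1)/m := by field_simp
  rw [h1, h2, div_pow] at hb
  have e : (1:ℝ) + 1/((j:ℝ)+1) = ((j:ℝ)+2)/((j:ℝ)+1) := by field_simp; ring
  rw [e] at hb
  have hb' := (div_le_div_iff₀ hjpos (by positivity : (0:ℝ) < m^r)).mp hb
  rw [div_pow, div_le_div_iff₀ (by positivity) (by positivity)]
  nlinarith [hb']

lemma prod_le_rpow (r t : ℕ) (hr : 1 ≤ r) :
    ∏ j ∈ range t, (((j:ℝ)+1) * r) / (((j:ℝ)+1) * r + 1) ≤ ((t:ℝ)+1) ^ (-(1:ℝ)/r) := by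
  set p : ℝ := ∏ j ∈ range t, (((j:ℝ)+1) * r) / (((j:ℝ)+1) * r + 1) with hp
  have hrpos : (0:ℝ) < r := by
    have : (1:ℝ) ≤ r := by exact_mod_cast hr
    linarith
  have h0 : 0 ≤ p := by
    apply Finset.prod_nonneg
    intro j _
    positivity
  have h1 : p ^ r ≤ 1/((t:ℝ)+1) := by
    rw [hp, ← Finset.prod_pow, ← telescope t]
    apply Finset.prod_le_prod
    · intro j _; positivity
    · intro j _; exact pointwise_bern r hr j
  have h3 : (p ^ r : ℝ) ^ ((1:ℝ)/r) = p := by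
    rw [← Real.rpow_natCast p r, ← Real.rpow_mul h0, mul_one_div, div_self (ne_of_gt hrpos),
      Real.rpow_one]
  have h2 : ((p ^ r : ℝ)) ^ ((1:ℝ)/r) ≤ (1/((t:ℝ)+1)) ^ ((1:ℝ)/r) :=
    Real.rpow_le_rpow (by positivity) h1 (by positivity)
  have h4 : ((1:ℝ)/((t:ℝ)+1)) ^ ((1:ℝ)/r) = ((t:ℝ)+1) ^ (-(1:ℝ)/r) := by
    rw [one_div, Real.inv_rpow (by positivity), ← Real.rpow_neg (by positivity), neg_div]
  rw [h3, h4] at h2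
  exact h2
lemma bad_count {n r t : ℕ} (i : Fin n) (R : Fin t → Finset (Fin n))
    (hR1 : ∀ j, i ∉ R j) (hR2 : ∀ j, (R j).card = r)
    (hR3 : ∀ j j', j ≠ j' → Disjoint (R j) (R j')) :
    ((univ.filter (fun π : Equiv.Perm (Fin n) => ∀ j : Fin t, ¬ ∀ m ∈ R j, π m < π i)).card : ℝ)
      = (Fintype.card (Equiv.Perm (Fin n)) : ℝ)
        * ∑ s ∈ range (t + 1), (-1 : ℝ) ^ s * (t.choose s) / (1 + s * r) := by
  classical
  have hU : ∀ S : Finset (Fin t), (S.biUnion R).card = S.card * r := by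
    intro S
    rw [Finset.card_biUnion (fun a _ b _ hab => hR3 a b hab)]
    rw [Finset.sum_congr rfl (fun j _ => hR2 j), Finset.sum_const, smul_eq_mul]
  have hAS : ∀ S : Finset (Fin t),
      ((univ.filter (fun π : Equiv.Perm (Fin n) => ∀ m ∈ S.biUnion R, π m < π i)).card : ℝ)
        = (Fintype.card (Equiv.Perm (Fin n)) : ℝ) / ((S.card : ℝ) * r + 1) := by
    intro S
    have hiU : i ∉ S.biUnion R := by
      rw [Finset.mem_biUnion]
      rintro ⟨j, -, hj⟩
      exact hR1 j hj
    have h := count_dominated i (S.biUnion R) hiU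
    rw [hU S] at h
    rw [eq_div_iff (by positivity)]
    exact_mod_cast h
  have hpoint : ∀ π : Equiv.Perm (Fin n),
      (if (∀ j : Fin t, ¬ ∀ m ∈ R j, π m < π i) then (1:ℝ) else 0)
        = ∏ j : Fin t, (1 - if (∀ m ∈ R j, π m < π i) then (1:ℝ) else 0) := by
    intro π
    by_cases h : ∀ j : Fin t, ¬ ∀ m ∈ R j, π m < π i
    · rw [if_pos h, Finset.prod_congr rfl (fun j _ => by rw [if_neg (h j), sub_zero]),
        Finset.prod_const_one]
    · rw [if_neg h]
      push_neg at h
      obtain ⟨j, hj⟩ := h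
      symm
      apply Finset.prod_eq_zero (Finset.mem_univ j)
      rw [if_pos hj, sub_self]
  have hexp : ∀ π : Equiv.Perm (Fin n),
      ∏ j : Fin t, (1 - if (∀ m ∈ R j, π m < π i) then (1:ℝ) else 0)
        = ∑ S ∈ (univ : Finset (Fin t)).powerset,
            (-1 : ℝ)^S.card * (if ∀ m ∈ S.biUnion R, π m < π i then (1:ℝ) else 0) := by
    intro π
    have e1 : ∏ j : Fin t, (1 - if (∀ m ∈ R j, π m < π i) then (1:ℝ) else 0)
        = ∏ j : Fin t, ((-(if (∀ m ∈ R j, π m < π i) then (1:ℝ) else 0)) + 1) := by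
      apply Finset.prod_congr rfl
      intro j _
      ring
    rw [e1, Finset.prod_add]
    apply Finset.sum_congr rfl
    intro S _
    rw [Finset.prod_const_one, mul_one]
    have e2 : ∏ j ∈ S, (-(if (∀ m ∈ R j, π m < π i) then (1:ℝ) else 0))
        = (-1:ℝ)^S.card * ∏ j ∈ S, (if (∀ m ∈ R j, π m < π i) then (1:ℝ) else 0) := by
      rw [Finset.prod_congr rfl (fun j _ => neg_eq_neg_one_mul _), Finset.prod_mul_distrib,
        Finset.prod_const]
    have e3 : ∏ j ∈ S, (if (∀ m ∈ R j, π m < π i) then (1:ℝ) else 0)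
        = (if ∀ m ∈ S.biUnion R, π m < π i then (1:ℝ) else 0) := by
      by_cases h : ∀ m ∈ S.biUnion R, π m < π i
      · rw [if_pos h, Finset.prod_congr rfl
          (fun j hj => if_pos (fun m hm => h m (Finset.mem_biUnion.mpr ⟨j, hj, hm⟩))),
          Finset.prod_const_one]
      · rw [if_neg h]
        push_neg at h
        obtain ⟨m, hm, hlt⟩ := h
        rw [Finset.mem_biUnion] at hm
        obtain ⟨j, hjS, hmj⟩ := hm
        apply Finset.prod_eq_zero hjS
        exact if_neg (fun hall => absurd (hall m hmj) (not_lt.mpr hlt))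
    rw [e2, e3]
  -- main chain
  rw [Finset.card_filter]
  push_cast
  calc (∑ π : Equiv.Perm (Fin n), if (∀ j : Fin t, ¬ ∀ m ∈ R j, π m < π i) then (1:ℝ) else 0)
      = ∑ π : Equiv.Perm (Fin n), ∑ S ∈ (univ : Finset (Fin t)).powerset,
          (-1 : ℝ)^S.card * (if ∀ m ∈ S.biUnion R, π m < π i then (1:ℝ) else 0) := by
        apply Finset.sum_congr rfl
        intro π _
        rw [hpoint π, hexp π]
    _ = ∑ S ∈ (univ : Finset (Fin t)).powerset, (-1 : ℝ)^S.card *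
          ((univ.filter (fun π : Equiv.Perm (Fin n) => ∀ m ∈ S.biUnion R, π m < π i)).card : ℝ) := by
        rw [Finset.sum_comm]
        apply Finset.sum_congr rfl
        intro S _
        rw [← Finset.mul_sum, Finset.sum_boole]
    _ = ∑ S ∈ (univ : Finset (Fin t)).powerset, (-1 : ℝ)^S.card *
          ((Fintype.card (Equiv.Perm (Fin n)) : ℝ) / ((S.card : ℝ) * r + 1)) := by
        apply Finset.sum_congr rfl
        intro S _
        rw [hAS S]
    _ = ∑ s ∈ range (t + 1), ∑ S ∈ powersetCard s (univ : Finset (Fin t)), (-1 : ℝ)^S.card *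
          ((Fintype.card (Equiv.Perm (Fin n)) : ℝ) / ((S.card : ℝ) * r + 1)) := by
        rw [Finset.sum_powerset]
        rw [card_univ, Fintype.card_fin]
    _ = ∑ s ∈ range (t + 1), ((t.choose s : ℝ)) * ((-1 : ℝ)^s *
          ((Fintype.card (Equiv.Perm (Fin n)) : ℝ) / ((s : ℝ) * r + 1))) := by
        apply Finset.sum_congr rfl
        intro s _
        rw [Finset.sum_congr rfl (fun S hS => by
          rw [(Finset.mem_powersetCard.mp hS).2]), Finset.sum_const, Finset.card_powersetCard,
          card_univ, Fintype.card_fin, nsmul_eq_mul]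
    _ = (Fintype.card (Equiv.Perm (Fin n)) : ℝ)
        * ∑ s ∈ range (t + 1), (-1 : ℝ) ^ s * (t.choose s) / (1 + s * r) := by
        rw [Finset.mul_sum]
        apply Finset.sum_congr rfl
        intro s _
        have h1 : ((s : ℝ) * r + 1) ≠ 0 := by positivity
        have h2 : ((1:ℝ) + s * r) ≠ 0 := by positivity
        field_simp
        ring
lemma k_le_bad {Q : Type*} [Fintype Q] {n t : ℕ} (C : Finset (Fin n → Q))
    (R : Fin n → Fin t → Finset (Fin n))
    (hR4 : ∀ i, ∀ j, ∀ x ∈ C, ∀ y ∈ C, (∀ m ∈ R i j, x m = y m) → x i = y i)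
    (π : Equiv.Perm (Fin n)) :
    C.card ≤ (Fintype.card Q) ^
      (univ.filter (fun i : Fin n => ∀ j : Fin t, ¬ ∀ m ∈ R i j, π m < π i)).card := by
  classical
  set B := univ.filter (fun i : Fin n => ∀ j : Fin t, ¬ ∀ m ∈ R i j, π m < π i) with hB
  have hinj : ∀ x ∈ C, ∀ y ∈ C, (∀ b ∈ B, x b = y b) → x = y := by
    intro x hx y hy hagree
    have key : ∀ N : ℕ, ∀ i : Fin n, (π i : ℕ) = N → x i = y i := by
      intro N
      induction N using Nat.strong_induction_on with
      | _ N ih =>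
        intro i hiN
        by_cases hiB : i ∈ B
        · exact hagree i hiB
        · rw [hB, Finset.mem_filter] at hiB
          push_neg at hiB
          obtain ⟨j, hj⟩ := hiB (mem_univ i)
          apply hR4 i j x hx y hy
          intro m hm
          have hlt : (π m : ℕ) < N := by
            rw [← hiN]
            exact hj m hm
          exact ih (π m) hlt m rfl
    funext i
    exact key (π i) i rfl
  have hcard1 : C.card = Fintype.card {x // x ∈ C} := (Fintype.card_coe C).symm
  have hcard2 : Fintype.card ({b // b ∈ B} → Q) = (Fintype.card Q) ^ B.card := by
    rw [Fintype.card_fun, Fintype.card_coe]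
  rw [hcard1, ← hcard2]
  apply Fintype.card_le_of_injective (fun x => (fun b => x.1 b.1))
  intro x y h
  exact Subtype.ext (hinj _ x.2 _ y.2 (fun b hb => congrFun h ⟨b, hb⟩))

/-- The rate of an `(n, k, r, t)` LRC code satisfies `k/n ≤ (t+1)^{-1/r}`. -/
theorem lrc_rate_root_bound {Q : Type*} [Fintype Q] (q n k r t : ℕ)
    (hq : Fintype.card Q = q) (hq2 : 2 ≤ q) (hr : 1 ≤ r) (ht : 1 ≤ t)
    (hn : t * r ≤ n - 1)
    (C : Finset (Fin n → Q)) (hcard : C.card = q ^ k)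
    (hC : ∀ i : Fin n, ∃ R : Fin t → Finset (Fin n),
      (∀ j, i ∉ R j) ∧ (∀ j, (R j).card = r) ∧
      (∀ j j', j ≠ j' → Disjoint (R j) (R j')) ∧
      (∀ j, ∀ x ∈ C, ∀ y ∈ C, (∀ m ∈ R j, x m = y m) → x i = y i)) :
    (k : ℝ) / n ≤ ((t : ℝ) + 1) ^ (-(1 : ℝ) / r) := by
  classical
  choose R hR1 hR2 hR3 hR4 using hC
  have hnpos : 0 < n := by
    have h1 : 1 ≤ t * r := Nat.one_le_iff_ne_zero.mpr (by positivity)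
    omega
  have hq1 : 1 < q := hq2
  -- Step 1: for every permutation, k is at most the number of "bad" coordinates
  have step1 : ∀ π : Equiv.Perm (Fin n),
      k ≤ (univ.filter (fun i : Fin n => ∀ j : Fin t, ¬ ∀ m ∈ R i j, π m < π i)).card := by
    intro π
    have h := k_le_bad C R hR4 π
    rw [hcard, hq] at h
    exact (Nat.pow_le_pow_iff_right hq1).mp h
  -- Step 2: sum over all permutations
  have step2 : Fintype.card (Equiv.Perm (Fin n)) * k
      ≤ ∑ π : Equiv.Perm (Fin n),
          (univ.filter (fun i : Fin n => ∀ j : Fin t, ¬ ∀ m ∈ R i j, π m < π i)).card := by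
    calc Fintype.card (Equiv.Perm (Fin n)) * k
        = ∑ _π : Equiv.Perm (Fin n), k := by rw [Finset.sum_const, card_univ, smul_eq_mul]
      _ ≤ _ := Finset.sum_le_sum (fun π _ => step1 π)
  -- Step 3: swap the order of summation
  have step3 : ∑ π : Equiv.Perm (Fin n),
      (univ.filter (fun i : Fin n => ∀ j : Fin t, ¬ ∀ m ∈ R i j, π m < π i)).card
      = ∑ i : Fin n,
        (univ.filter (fun π : Equiv.Perm (Fin n) => ∀ j : Fin t, ¬ ∀ m ∈ R i j, π m < π i)).card := by
    have h1 : ∀ π : Equiv.Perm (Fin n),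
        (univ.filter (fun i : Fin n => ∀ j : Fin t, ¬ ∀ m ∈ R i j, π m < π i)).card
          = ∑ i : Fin n, if (∀ j : Fin t, ¬ ∀ m ∈ R i j, π m < π i) then 1 else 0 :=
      fun π => Finset.card_filter _ _
    have h2 : ∀ i : Fin n,
        (univ.filter (fun π : Equiv.Perm (Fin n) => ∀ j : Fin t, ¬ ∀ m ∈ R i j, π m < π i)).card
          = ∑ π : Equiv.Perm (Fin n), if (∀ j : Fin t, ¬ ∀ m ∈ R i j, π m < π i) then 1 else 0 :=
      fun i => Finset.card_filter _ _
    rw [Finset.sum_congr rfl (fun π _ => h1 π), Finset.sum_congr rfl (fun i _ => h2 i),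
      Finset.sum_comm]
  -- put everything together over ℝ
  set p : ℝ := ∏ j ∈ range t, (((j : ℝ) + 1) * r) / (((j : ℝ) + 1) * r + 1) with hp
  have hNP : (0:ℝ) < (Fintype.card (Equiv.Perm (Fin n)) : ℝ) := by
    have : 0 < Fintype.card (Equiv.Perm (Fin n)) := Fintype.card_pos
    exact_mod_cast this
  have step4 : (Fintype.card (Equiv.Perm (Fin n)) : ℝ) * k
      ≤ (Fintype.card (Equiv.Perm (Fin n)) : ℝ) * (n * p) := by
    calc (Fintype.card (Equiv.Perm (Fin n)) : ℝ) * k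
        ≤ ((∑ π : Equiv.Perm (Fin n),
            (univ.filter (fun i : Fin n => ∀ j : Fin t, ¬ ∀ m ∈ R i j, π m < π i)).card : ℕ) : ℝ) := by
          exact_mod_cast step2
      _ = ∑ i : Fin n,
          ((univ.filter (fun π : Equiv.Perm (Fin n) => ∀ j : Fin t, ¬ ∀ m ∈ R i j, π m < π i)).card : ℝ) := by
          rw [step3]
          push_cast
          rfl
      _ = ∑ _i : Fin n, (Fintype.card (Equiv.Perm (Fin n)) : ℝ) * p := by
          apply Finset.sum_congr rfl
          intro i _
          rw [bad_count i (R i) (hR1 i) (hR2 i) (hR3 i), sum_eq_prod_form r t hr, hp]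
      _ = (Fintype.card (Equiv.Perm (Fin n)) : ℝ) * (n * p) := by
          rw [Finset.sum_const, card_univ, Fintype.card_fin, nsmul_eq_mul]
          ring
  have hk_np : (k : ℝ) ≤ n * p := le_of_mul_le_mul_left step4 hNP
  have hbound : p ≤ ((t : ℝ) + 1) ^ (-(1 : ℝ) / r) := prod_le_rpow r t hr
  have hnR : (0:ℝ) < (n:ℝ) := by exact_mod_cast hnpos
  rw [div_le_iff₀ hnR]
  calc (k : ℝ) ≤ n * p := hk_np
    _ ≤ n * (((t : ℝ) + 1) ^ (-(1 : ℝ) / r)) := by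
        apply mul_le_mul_of_nonneg_left hbound (le_of_lt hnR)
    _ = ((t : ℝ) + 1) ^ (-(1 : ℝ) / r) * n := by ring
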